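/- For all positive integers m and n, the identity Σ_{k=0}^{m} B_{n,k}^2 · B_{m,k} = (1/2)·C(2n,n)^2·C(2m,m)·[ 1 − ((n+2m)/m)·C(n+m,n)^{-2}·Σ_{k=0}^{m-1} C(n+k,n)·C(n+k,n-1) ] holds, where B_{n,k} = (k/n)·C(2n, n−k) and B_{n,0} = 0. (This is Conjecture 4.2 of Miana–Ohtsuka–Romero with r = m and s = n, proved without the restriction r = min{n,m}.) -/

import Mathlib

set_option maxHeartbeats 1000000

/-- The Catalan triangle numbers `B_{n,k} = (k/n) * C(2n, n-k)` (as rationals),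
with the convention `B_{n,k} = 0` for `k > n`; in particular `B_{n,0} = 0`. -/
def catB (n k : ℕ) : ℚ :=
  if k ≤ n then (k : ℚ) / n * ((2 * n).choose (n - k)) else 0

/-- Gosper/telescoping certificate for the induction step. -/
def Wf (n m j : ℕ) : ℚ :=
  if j ≤ n ∧ j ≤ m then
    -((2*(m:ℚ)+1) * ((n:ℚ)-(j:ℚ))^2 * (((n:ℚ)+2*m+2)*j*(j+1)+(n:ℚ)*((m:ℚ)+1)) *
      (((2*n).choose (n-j) : ℚ))^2 * (((2*m).choose (m-j) : ℚ))) /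
      ((n:ℚ)^2*((n:ℚ)+2*m)*((n:ℚ)+(m:ℚ)+1)^2*((m:ℚ)+(j:ℚ)+1))
  else 0

lemma chooseQ_succ (N j : ℕ) (h : j ≤ N) :
    ((N.choose (j+1)) : ℚ) * ((j:ℚ)+1) = (N.choose j : ℚ) * ((N:ℚ) - (j:ℚ)) := by
  have h1 := Nat.choose_succ_right_eq N j
  calc ((N.choose (j+1)) : ℚ) * ((j:ℚ)+1) = ((N.choose (j+1) * (j+1) : ℕ) : ℚ) := by push_cast; ring
    _ = ((N.choose j * (N - j) : ℕ) : ℚ) := by rw [h1]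
    _ = (N.choose j : ℚ) * ((N:ℚ) - (j:ℚ)) := by push_cast [Nat.cast_sub h]; ring

lemma chooseQ_succ_mul (N j : ℕ) :
    (((N+1).choose (j+1)) : ℚ) * ((j:ℚ)+1) = ((N:ℚ)+1) * (N.choose j : ℚ) := by
  have h1 := Nat.add_one_mul_choose_eq N j
  calc (((N+1).choose (j+1)) : ℚ) * ((j:ℚ)+1) = (((N+1).choose (j+1) * (j+1) : ℕ) : ℚ) := by push_cast; ring
    _ = ((Nat.succ N * N.choose j : ℕ) : ℚ) := by rw [← h1]
    _ = ((N:ℚ)+1) * (N.choose j : ℚ) := by push_cast; ring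

lemma step_perk (n m k : ℕ) (hn : 0 < n) (hm : 0 < m) (hk : k ≤ m + 1) :
    catB n k ^ 2 * catB (m+1) k
      - (2*(2*(m:ℚ)+1)*((n:ℚ)+2*(m:ℚ)+2)*(m:ℚ)/(((n:ℚ)+2*(m:ℚ))*((n:ℚ)+(m:ℚ)+1)^2))
          * (catB n k ^ 2 * catB m k)
    = Wf n m k - Wf n m (k-1) := by
  have hmQ : (0:ℚ) < (m:ℚ) := by exact_mod_cast hm
  have hnQ : (0:ℚ) < (n:ℚ) := by exact_mod_cast hn
  rcases Nat.eq_zero_or_pos k with rfl | hk1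
  · simp [catB, Wf, hn.le]
  by_cases hkn : k ≤ n
  · have hkQ : (k:ℚ) ≤ (n:ℚ) := by exact_mod_cast hkn
    have hck : ((k-1:ℕ):ℚ) = (k:ℚ) - 1 := by
      rw [Nat.cast_sub hk1]; norm_num
    by_cases hkm : k ≤ m
    · -- main case
      have hkmQ : (k:ℚ) ≤ (m:ℚ) := by exact_mod_cast hkm
      have hidx1 : n - (k-1) = (n-k)+1 := by omega
      have hidx2 : m - (k-1) = (m-k)+1 := by omega
      have hidx3 : m + 1 - k = (m-k)+1 := by omega
      have hidx4 : 2*(m+1) = (2*m+1)+1 := by ring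
      have hcn : ((n-k:ℕ):ℚ) = (n:ℚ)-(k:ℚ) := by rw [Nat.cast_sub hkn]
      have hcm : ((m-k:ℕ):ℚ) = (m:ℚ)-(k:ℚ) := by rw [Nat.cast_sub hkm]
      have hd1 : (n:ℚ)-(k:ℚ)+1 ≠ 0 := by intro h; nlinarith
      have hd2 : (m:ℚ)-(k:ℚ)+1 ≠ 0 := by intro h; nlinarith
      have hd3 : (m:ℚ)+(k:ℚ)+1 ≠ 0 := by positivity
      have e1 : (((2*n).choose ((n-k)+1)):ℚ) =
          (((2*n).choose (n-k)):ℚ) * ((n:ℚ)+(k:ℚ)) / ((n:ℚ)-(k:ℚ)+1) := by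
        rw [eq_div_iff hd1]
        have := chooseQ_succ (2*n) (n-k) (by omega)
        rw [hcn] at this; push_cast at this ⊢; linarith
      have e2 : (((2*m).choose ((m-k)+1)):ℚ) =
          (((2*m).choose (m-k)):ℚ) * ((m:ℚ)+(k:ℚ)) / ((m:ℚ)-(k:ℚ)+1) := by
        rw [eq_div_iff hd2]
        have := chooseQ_succ (2*m) (m-k) (by omega)
        rw [hcm] at this; push_cast at this ⊢; linarith
      have e3 : ((((2*m+1)+1).choose ((m-k)+1)):ℚ) =
          (((2*m).choose (m-k)):ℚ) * ((2*(m:ℚ)+1)*(2*(m:ℚ)+2)) /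
            (((m:ℚ)-(k:ℚ)+1)*((m:ℚ)+(k:ℚ)+1)) := by
        rw [eq_div_iff (mul_ne_zero hd2 hd3)]
        have s1 := chooseQ_succ_mul (2*m) (m-k)
        have s3 := chooseQ_succ (2*m+1) (m-k) (by omega)
        have s2 := chooseQ_succ_mul (2*m+1) (m-k)
        rw [hcm] at s1 s2 s3
        push_cast at s1 s2 s3 ⊢
        linear_combination ((m:ℚ)+(k:ℚ)+1)*s2 - (2*(m:ℚ)+2)*s3 + (2*(m:ℚ)+2)*s1
      rw [catB, catB, catB, if_pos hkn, if_pos hkm, if_pos hk,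
        Wf, Wf, if_pos ⟨hkn, hkm⟩,
        if_pos (show k-1 ≤ n ∧ k-1 ≤ m from ⟨by omega, by omega⟩),
        hidx1, hidx2, hidx3, hidx4, hck, e1, e2, e3]
      have hn0 : (n:ℚ) ≠ 0 := hnQ.ne'
      have hm0 : (m:ℚ) ≠ 0 := hmQ.ne'
      have hm1 : (m:ℚ)+1 ≠ 0 := by positivity
      have hnm : (n:ℚ)+2*(m:ℚ) ≠ 0 := by positivity
      have hnm1 : (n:ℚ)+(m:ℚ)+1 ≠ 0 := by positivity
      have hmk : (m:ℚ)+((k:ℚ)-1)+1 ≠ 0 := by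
        have : (0:ℚ) < (k:ℚ) := by exact_mod_cast hk1
        intro h; nlinarith
      push_cast
      field_simp
      ring
    · -- k = m+1 case
      have hkm1 : k = m+1 := by omega
      subst hkm1
      have hmn : m + 1 ≤ n := hkn
      have hmnQ : (m:ℚ)+1 ≤ (n:ℚ) := by exact_mod_cast hmn
      have hmQn : (0:ℚ) < (m:ℚ) := hmQ
      have hidx1 : n - m = (n-(m+1))+1 := by omega
      have hcnm : ((n-(m+1):ℕ):ℚ) = (n:ℚ)-(m:ℚ)-1 := by
        rw [Nat.cast_sub hmn]; push_cast; ring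
      have hnm1 : (n:ℚ)+(m:ℚ)+1 ≠ 0 := by positivity
      have eA : (((2*n).choose (n-(m+1))):ℚ)
          = (((2*n).choose ((n-(m+1))+1)):ℚ) * ((n:ℚ)-(m:ℚ)) / ((n:ℚ)+(m:ℚ)+1) := by
        rw [eq_div_iff hnm1]
        have := chooseQ_succ (2*n) (n-(m+1)) (by omega)
        rw [hcnm] at this
        push_cast at this ⊢
        linarith
      have c2 : catB (m+1) (m+1) = 1 := by
        rw [catB, if_pos (le_refl _), Nat.sub_self, Nat.choose_zero_right]
        have : ((m+1:ℕ):ℚ) ≠ 0 := by positivity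
        field_simp
        norm_num
      have c3 : catB m (m+1) = 0 := by rw [catB, if_neg (by omega)]
      have w1 : Wf n m (m+1) = 0 := by rw [Wf, if_neg (by omega)]
      rw [show m+1-1 = m from rfl, c2, c3, w1, catB, if_pos hkn,
        Wf, if_pos (show m ≤ n ∧ m ≤ m from ⟨by omega, le_refl m⟩),
        hidx1, Nat.sub_self, Nat.choose_zero_right, eA]
      have hn0 : (n:ℚ) ≠ 0 := hnQ.ne'
      have hnm : (n:ℚ)+2*(m:ℚ) ≠ 0 := by positivity
      have hmm1 : (m:ℚ)+(m:ℚ)+1 ≠ 0 := by positivity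
      push_cast
      field_simp
      ring
  · -- k > n case
    have h1 : ¬ (k ≤ n ∧ k ≤ m) := by tauto
    rw [catB, if_neg hkn, Wf, if_neg h1]
    by_cases h2 : k - 1 ≤ n
    · have h3 : k - 1 = n := by omega
      have h4 : k - 1 ≤ m := by omega
      rw [Wf, if_pos ⟨h2, h4⟩, h3]
      simp
    · rw [Wf, if_neg (by tauto)]
      simp

lemma tel (n m : ℕ) :
    ∑ k ∈ Finset.range (m+1+1), (Wf n m k - Wf n m (k-1)) = - Wf n m 0 := by
  rw [Finset.sum_range_succ']
  simp only [Nat.add_sub_cancel, Nat.zero_sub]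
  rw [Finset.sum_range_sub (f := Wf n m)]
  have : Wf n m (m+1) = 0 := by rw [Wf, if_neg (by omega)]
  rw [this]
  ring

lemma rhs_rec (n m : ℕ) (hn : 0 < n) (hm : 0 < m) :
    1 / 2 * ((2 * (m+1)).choose (m+1) : ℚ) *
        (1 - ((n : ℚ) + 2 * ((m:ℚ)+1)) / ((m:ℚ)+1) * (((n + (m+1)).choose n : ℚ))⁻¹ ^ 2 *
          ∑ k ∈ Finset.range (m+1), ((n + k).choose n : ℚ) * ((n + k).choose (n - 1) : ℚ))
      = (2*(2*(m:ℚ)+1)*((n:ℚ)+2*(m:ℚ)+2)*(m:ℚ)/(((n:ℚ)+2*(m:ℚ))*((n:ℚ)+(m:ℚ)+1)^2)) *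
          (1 / 2 * ((2 * m).choose m : ℚ) *
        (1 - ((n : ℚ) + 2 * m) / m * (((n + m).choose n : ℚ))⁻¹ ^ 2 *
          ∑ k ∈ Finset.range m, ((n + k).choose n : ℚ) * ((n + k).choose (n - 1) : ℚ)))
        - Wf n m 0 / (((2 * n).choose n : ℚ) ^ 2) := by
  have hmQ : (0:ℚ) < (m:ℚ) := by exact_mod_cast hm
  have hnQ : (0:ℚ) < (n:ℚ) := by exact_mod_cast hn
  have hm1 : (m:ℚ)+1 ≠ 0 := by positivity
  have hnm1 : (n:ℚ)+(m:ℚ)+1 ≠ 0 := by positivity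
  have hnm2 : (n:ℚ)+2*(m:ℚ) ≠ 0 := by positivity
  have hchp : 0 < ((n+m).choose n : ℚ) := by
    exact_mod_cast Nat.choose_pos (show n ≤ n+m by omega)
  have hch : ((n+m).choose n : ℚ) ≠ 0 := hchp.ne'
  have hch2 : ((2*n).choose n : ℚ) ≠ 0 := by
    have := Nat.choose_pos (show n ≤ 2*n by omega); positivity
  -- e1 : central binomial step
  have e1 : ((2*(m+1)).choose (m+1) : ℚ) = 2*(2*(m:ℚ)+1)*((2*m).choose m : ℚ)/((m:ℚ)+1) := by
    rw [eq_div_iff hm1]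
    have s1 := chooseQ_succ_mul (2*m) m
    have s2 := chooseQ_succ_mul (2*m+1) m
    have sym : ((2*m+1).choose m : ℕ) = (2*m+1).choose (m+1) := by
      have := Nat.choose_symm (show m ≤ 2*m+1 by omega)
      rw [show 2*m+1-m = m+1 by omega] at this
      omega
    have symQ : ((2*m+1).choose m : ℚ) = ((2*m+1).choose (m+1) : ℚ) := by exact_mod_cast sym
    rw [show 2*(m+1) = 2*m+1+1 by ring]
    push_cast at s1 s2 symQ ⊢
    nlinarith [s1, s2, symQ, hm1]
  have e2 : ((n+(m+1)).choose n : ℚ) = ((n:ℚ)+(m:ℚ)+1)*((n+m).choose n : ℚ)/((m:ℚ)+1) := by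
    rw [eq_div_iff hm1]
    have s := chooseQ_succ_mul (n+m) m
    have sym1 : ((n+m).choose m : ℕ) = (n+m).choose n := by
      have := Nat.choose_symm (show n ≤ n+m by omega)
      rw [show n+m-n = m by omega] at this
      omega
    have sym2 : ((n+m+1).choose (m+1) : ℕ) = (n+m+1).choose n := by
      have := Nat.choose_symm (show n ≤ n+m+1 by omega)
      rw [show n+m+1-n = m+1 by omega] at this
      omega
    rw [show n+(m+1) = (n+m)+1 by ring, ← sym2]
    push_cast at s ⊢
    have sym1Q : ((n+m).choose m : ℚ) = ((n+m).choose n : ℚ) := by exact_mod_cast sym1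
    linarith [s, sym1Q.symm ▸ s]
  have e3 : ((n+m).choose (n-1) : ℚ) = (n:ℚ)*((n+m).choose n : ℚ)/((m:ℚ)+1) := by
    rw [eq_div_iff hm1]
    have t := chooseQ_succ (n+m) (n-1) (by omega)
    rw [show (n-1)+1 = n by omega] at t
    have hc : ((n-1:ℕ):ℚ) = (n:ℚ)-1 := by
      rw [Nat.cast_sub hn]; norm_num
    rw [hc] at t
    push_cast at t ⊢
    linarith
  rw [Finset.sum_range_succ, Wf, if_pos ⟨Nat.zero_le n, Nat.zero_le m⟩,
    Nat.sub_zero, Nat.sub_zero, e1, e2, e3]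
  push_cast
  field_simp
  ring

theorem stmt0 (m n : ℕ) (hm : 0 < m) (hn : 0 < n) :
    ∑ k ∈ Finset.range (m + 1), catB n k ^ 2 * catB m k =
      1 / 2 * ((2 * n).choose n : ℚ) ^ 2 * ((2 * m).choose m : ℚ) *
        (1 - ((n : ℚ) + 2 * m) / m * (((n + m).choose n : ℚ))⁻¹ ^ 2 *
          ∑ k ∈ Finset.range m, ((n + k).choose n : ℚ) * ((n + k).choose (n - 1) : ℚ)) := by
  induction m, hm using Nat.le_induction with
  | base =>
    have hnQ : (0:ℚ) < (n:ℚ) := by exact_mod_cast hn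
    have hn1 : (n:ℚ)+1 ≠ 0 := by positivity
    rw [Finset.sum_range_succ, Finset.sum_range_succ, Finset.sum_range_zero,
      Finset.sum_range_one]
    have c0 : catB n 0 = 0 := by simp [catB]
    have c1 : catB 1 1 = 1 := by norm_num [catB]
    have c2 : catB n 1 = 1/(n:ℚ) * (((2*n).choose (n-1)):ℚ) := by
      rw [catB, if_pos (show 1 ≤ n from hn)]; push_cast; ring
    have d1 : ((n+0:ℕ)) = n := by omega
    have d2 : ((n:ℕ).choose n : ℚ) = 1 := by rw [Nat.choose_self]; norm_num
    have d3 : ((n:ℕ).choose (n-1) : ℚ) = (n:ℚ) := by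
      have := Nat.choose_symm (show n-1 ≤ n by omega)
      rw [show n-(n-1) = 1 by omega, Nat.choose_one_right] at this
      exact_mod_cast this.symm
    have d4 : ((n+1).choose n : ℚ) = (n:ℚ)+1 := by
      rw [Nat.choose_succ_self_right]; push_cast; ring
    have e : ((2*n).choose (n-1) : ℚ) = (n:ℚ)*((2*n).choose n : ℚ)/((n:ℚ)+1) := by
      rw [eq_div_iff hn1]
      have t := chooseQ_succ (2*n) (n-1) (by omega)
      rw [show (n-1)+1 = n by omega] at t
      have hc : ((n-1:ℕ):ℚ) = (n:ℚ)-1 := by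
        rw [Nat.cast_sub hn]; norm_num
      rw [hc] at t
      push_cast at t ⊢
      linarith
    rw [c0, c1, c2, d1, d2, d3, d4, e]
    norm_num [Nat.choose]
    field_simp
    ring
  | succ m hm1 ih =>
    have hmQ : (0:ℚ) < (m:ℚ) := by exact_mod_cast hm1
    have hnQ : (0:ℚ) < (n:ℚ) := by exact_mod_cast hn
    have key : (∑ k ∈ Finset.range (m+1+1), catB n k ^ 2 * catB (m+1) k)
        = (2*(2*(m:ℚ)+1)*((n:ℚ)+2*(m:ℚ)+2)*(m:ℚ)/(((n:ℚ)+2*(m:ℚ))*((n:ℚ)+(m:ℚ)+1)^2))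
            * (∑ k ∈ Finset.range (m+1), catB n k ^ 2 * catB m k) - Wf n m 0 := by
      have h0 : catB m (m+1) = 0 := by rw [catB, if_neg (by omega)]
      have expand : (2*(2*(m:ℚ)+1)*((n:ℚ)+2*(m:ℚ)+2)*(m:ℚ)/(((n:ℚ)+2*(m:ℚ))*((n:ℚ)+(m:ℚ)+1)^2))
            * (∑ k ∈ Finset.range (m+1), catB n k ^ 2 * catB m k)
          = ∑ k ∈ Finset.range (m+1+1),
              (2*(2*(m:ℚ)+1)*((n:ℚ)+2*(m:ℚ)+2)*(m:ℚ)/(((n:ℚ)+2*(m:ℚ))*((n:ℚ)+(m:ℚ)+1)^2))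
                * (catB n k ^ 2 * catB m k) := by
        rw [Finset.mul_sum]
        conv_rhs => rw [Finset.sum_range_succ]
        rw [h0]
        ring
      have sub : (∑ k ∈ Finset.range (m+1+1), catB n k ^ 2 * catB (m+1) k)
          - (2*(2*(m:ℚ)+1)*((n:ℚ)+2*(m:ℚ)+2)*(m:ℚ)/(((n:ℚ)+2*(m:ℚ))*((n:ℚ)+(m:ℚ)+1)^2))
            * (∑ k ∈ Finset.range (m+1), catB n k ^ 2 * catB m k)
          = - Wf n m 0 := by
        rw [expand, ← Finset.sum_sub_distrib, ← tel n m]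
        exact Finset.sum_congr rfl fun k hk =>
          step_perk n m k hn hm1 (by simpa using Finset.mem_range.mp hk |> Nat.lt_succ_iff.mp)
      linarith
    have hcn : (((2 * n).choose n : ℚ)) ≠ 0 := by
      have := Nat.choose_pos (show n ≤ 2*n by omega)
      positivity
    have rr := rhs_rec n m hn hm1
    have hinv : ((2 * n).choose n : ℚ)^2 * (((2 * n).choose n : ℚ))⁻¹^2 = 1 := by
      field_simp
    push_cast at key ih rr ⊢
    linear_combination key
      + (2*(2*(m:ℚ)+1)*((n:ℚ)+2*(m:ℚ)+2)*(m:ℚ)/(((n:ℚ)+2*(m:ℚ))*((n:ℚ)+(m:ℚ)+1)^2)) * ih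
      - ((2 * n).choose n : ℚ)^2 * rr + Wf n m 0 * hinv
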